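/- Let B be a stationary Bratteli diagram for a substitution of dimension d with Perron eigenvalue θ, let Δ_s be the Pearson–Bellissard Laplacian, and let U_e be the path-extension operator inserting edge e after the root. If U_e γ ≠ 0, then the eigenvalues satisfy the affine recursion λ_{U_e γ} = θ^{(d+2−s)/d}·(λ_γ − (μ[ε]−μ[∘])/G_s(∘)) + (μ[ε']−μ[∘])/G_s(∘) + (μ[ε'e]−μ[ε'])/G_s(ε'), where γ = (ε, e_1, e_2, …) and U_e γ = (ε', e, e_1, e_2, …). -/

import Mathlib

/-- affine recursion for the eigenvalues of `Δ_s` under the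
Cuntz–Krieger path-extension operators `U_e` on a stationary Bratteli diagram.
The path `γ = (ε, e₁, …)` of length `n` is encoded by the sequences
`μ k = μ[γ_k]`, `G k = G_s(γ_k)` (`k ≤ n`), and its extension
`U_e γ = (ε', e, e₁, …)` by `μ' k = μ[(U_e γ)_k]`, `G' k = G_s((U_e γ)_k)`
(`k ≤ n+1`); stationarity gives `μ' k = θ⁻¹ μ (k−1)` and
`G' k = θ^{(s−2)/d − 2} G (k−1)` for `k ≥ 2`, while the root data agree:
`μ' 0 = μ 0 = μ[∘]`, `G' 0 = G 0 = G_s(∘)`. The eigenvalues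
`λ_γ = ∑_{k<n} (μ(k+1) − μ k)/G k − μ n/G n` then satisfy
`λ_{U_e γ} = θ^{(d+2−s)/d} (λ_γ − (μ[ε]−μ[∘])/G_s(∘)) + (μ[ε']−μ[∘])/G_s(∘)
  + (μ[ε'e]−μ[ε'])/G_s(ε')`. -/
theorem stmt_12 (θ d s : ℝ) (hθ : 0 < θ) (hd : 0 < d)
    (n : ℕ) (hn : 2 ≤ n)
    (μ G μ' G' : ℕ → ℝ)
    (hGne : ∀ k, G k ≠ 0) (hG'ne : ∀ k, G' k ≠ 0)
    (h0 : μ' 0 = μ 0) (hg0 : G' 0 = G 0)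
    (hμk : ∀ k, 2 ≤ k → k ≤ n + 1 → μ' k = θ⁻¹ * μ (k - 1))
    (hGk : ∀ k, 2 ≤ k → k ≤ n + 1 → G' k = θ ^ ((s - 2) / d - 2) * G (k - 1)) :
    (∑ k ∈ Finset.range (n + 1), (μ' (k + 1) - μ' k) / G' k) - μ' (n + 1) / G' (n + 1) =
      θ ^ ((d + 2 - s) / d) *
        ((∑ k ∈ Finset.range n, (μ (k + 1) - μ k) / G k) - μ n / G n -
          (μ 1 - μ 0) / G 0) +
      (μ' 1 - μ' 0) / G' 0 + (μ' 2 - μ' 1) / G' 1 := by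
  obtain ⟨m, rfl⟩ : ∃ m, n = m + 2 := ⟨n - 2, by omega⟩
  set c := θ ^ ((d + 2 - s) / d) with hc
  have hθe : θ ^ ((s - 2) / d - 2) ≠ 0 := (Real.rpow_pos_of_pos hθ _).ne'
  have hce : c = θ⁻¹ / θ ^ ((s - 2) / d - 2) := by
    rw [eq_div_iff hθe, hc, ← Real.rpow_add hθ, ← Real.rpow_neg_one θ]
    congr 1
    field_simp
    ring
  have key : ∀ k : ℕ, 2 ≤ k → k ≤ m + 2 →
      (μ' (k + 1) - μ' k) / G' k = c * ((μ k - μ (k - 1)) / G (k - 1)) := by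
    intro k h2 hk
    rw [hμk (k + 1) (by omega) (by omega), hμk k h2 (by omega), hGk k h2 (by omega),
      Nat.add_sub_cancel, hce]
    field_simp
  have keyn : μ' (m + 3) / G' (m + 3) = c * (μ (m + 2) / G (m + 2)) := by
    rw [hμk (m + 3) (by omega) (by omega), hGk (m + 3) (by omega) (by omega), hce]
    norm_num
    field_simp
  have hsum : ∑ i ∈ Finset.range (m + 1), (μ' (i + 2 + 1) - μ' (i + 2)) / G' (i + 2)
      = c * ∑ i ∈ Finset.range (m + 1), (μ (i + 1 + 1) - μ (i + 1)) / G (i + 1) := by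
    rw [Finset.mul_sum]
    refine Finset.sum_congr rfl fun i hi => ?_
    have := key (i + 2) (by omega) (by simp at hi; omega)
    simpa using this
  rw [show m + 2 + 1 = m + 3 from rfl, Finset.sum_range_succ' _ (m + 2),
    Finset.sum_range_succ' _ (m + 1), Finset.sum_range_succ' _ (m + 1), keyn, hsum]
  ring
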